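/- If there exists a nonempty u ⊆ {1,…,s} such that rank(C_{u,1_u}) < |u| over F₂, then the maximal gain coefficient Γ = max over nonempty u′ ⊆ {1,…,s} and k ∈ {0,1,…,m−1}^{|u′|} of Γ_{u′,k} equals 2^m. -/

import Mathlib

open Finset

noncomputable section

/-- The bit vector `i⃗ ∈ F₂^m` of the integer `i = Σ_{ℓ=1}^m i_ℓ 2^{ℓ-1}`. -/
def bvec (m : ℕ) (i : ℕ) : Fin m → ZMod 2 :=
  fun ℓ => if Nat.testBit i ℓ.1 then 1 else 0

/-- The `(r+1)`-st row (i.e. `r` with 0-indexing) of an `m × m` matrix over `F₂`,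
as a vector in `F₂^m`; junk value `0` if `r ≥ m` (never used under the hypotheses below). -/
def rowAt (m : ℕ) (A : Matrix (Fin m) (Fin m) (ZMod 2)) (r : ℕ) : Fin m → ZMod 2 :=
  fun ℓ => if h : r < m then A ⟨r, h⟩ ℓ else 0

/-- The stacked matrix `C_{u,k}`: for each `j ∈ u`, the first `k j` rows of `C j`. -/
def stack {m s : ℕ} (C : Fin s → Matrix (Fin m) (Fin m) (ZMod 2))
    (u : Finset (Fin s)) (k : Fin s → ℕ) :
    Matrix ((j : {x // x ∈ u}) × Fin (k j.1)) (Fin m) (ZMod 2) :=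
  fun p => rowAt m (C p.1.1) p.2.1

/-- `∇C_{u,k}`: the matrix whose rows are the `(k j + 1)`-st rows (1-indexed) of `C j`, `j ∈ u`. -/
def grad {m s : ℕ} (C : Fin s → Matrix (Fin m) (Fin m) (ZMod 2))
    (u : Finset (Fin s)) (k : Fin s → ℕ) :
    Matrix {x // x ∈ u} (Fin m) (ZMod 2) :=
  fun j => rowAt m (C j.1) (k j.1)

/-- The coordinate `x_{ij} ∈ [0,1)` of the digital net generated by `C₁,…,C_s`:
`x_{ij} = Σ_{ℓ=1}^m y_ℓ 2^{-ℓ}` where `y = C_j · i⃗` over `F₂`. -/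
def pt {m s : ℕ} (C : Fin s → Matrix (Fin m) (Fin m) (ZMod 2)) (i : ℕ) (j : Fin s) : ℝ :=
  ∑ ℓ : Fin m, (((C j).mulVec (bvec m i) ℓ).val : ℝ) / 2 ^ (ℓ.1 + 1)

/-- The factor `N`: with `M(x,x') = max{k ∈ ℕ₀ : ⌊2^k x⌋ = ⌊2^k x'⌋}` (the number of matching
leading binary digits), `Nf x x' c` equals `1` if `M(x,x') > c` (equivalently the first `c+1`
binary digits match), `-1` if `M(x,x') = c` (the first `c` digits match but not `c+1`), and
`0` if `M(x,x') < c`. -/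
def Nf (x x' : ℝ) (c : ℕ) : ℤ :=
  if ⌊(2:ℝ) ^ (c + 1) * x⌋ = ⌊(2:ℝ) ^ (c + 1) * x'⌋ then 1
  else if ⌊(2:ℝ) ^ c * x⌋ = ⌊(2:ℝ) ^ c * x'⌋ then -1
  else 0

/-- The gain coefficient `Γ_{u,k} = 2^{-m} Σ_{i=0}^{2^m-1} Σ_{i'=0}^{2^m-1} ∏_{j∈u} N_{i,i',j}`. -/
def Gam {m s : ℕ} (C : Fin s → Matrix (Fin m) (Fin m) (ZMod 2))
    (u : Finset (Fin s)) (k : Fin s → ℕ) : ℚ :=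
  (2 ^ m : ℚ)⁻¹ * ∑ i ∈ Finset.range (2 ^ m), ∑ i' ∈ Finset.range (2 ^ m),
      ∏ j ∈ u, (Nf (pt C i j) (pt C i' j) (k j) : ℚ)

/-! ### Auxiliary lemmas -/

lemma zmod2_ne : ∀ x : ZMod 2, x ≠ 0 → x = 1 := by decide

lemma val_iff : ∀ d d' : ZMod 2, d.val = d'.val ↔ d = d' := by decide

lemma add_val : ∀ d d' : ZMod 2, d ≠ d' → (d + d').val = 1 := by decide

lemma self_add : ∀ d : ZMod 2, (d + d).val = 0 := by decide

lemma sum_inv_pow (m : ℕ) : ∑ ℓ ∈ Finset.range m, (1:ℝ)/2^(ℓ+1) = 1 - (1/2)^m := by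
  induction m with
  | zero => simp
  | succ n ih =>
    rw [Finset.sum_range_succ, ih]; rw [pow_succ, pow_succ]
    simp only [one_div, inv_pow, mul_inv]; ring

lemma sum_inv_pow' (m : ℕ) : ∑ ℓ ∈ Finset.range m, (1:ℝ)/2^ℓ = 2 - 2*(1/2)^m := by
  induction m with
  | zero => simp
  | succ n ih =>
    rw [Finset.sum_range_succ, ih]; rw [pow_succ]
    simp only [one_div, inv_pow, mul_inv]; ring

lemma val_le_one (x : ZMod 2) : (x.val : ℝ) ≤ 1 := by
  have := ZMod.val_lt x
  have : x.val ≤ 1 := by omega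
  exact_mod_cast this

/-- The abstract binary expansion `Σ_ℓ v_ℓ 2^{-(ℓ+1)}`. -/
def pt' {m : ℕ} (v : Fin m → ZMod 2) : ℝ :=
  ∑ ℓ : Fin m, ((v ℓ).val : ℝ) / 2 ^ (ℓ.1 + 1)

lemma pt'_nonneg {m : ℕ} (v : Fin m → ZMod 2) : 0 ≤ pt' v := by
  apply Finset.sum_nonneg
  intro ℓ _
  positivity

lemma pt'_lt_one {m : ℕ} (v : Fin m → ZMod 2) : pt' v < 1 := by
  have h1 : pt' v ≤ ∑ ℓ : Fin m, (1:ℝ)/2^(ℓ.1+1) := by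
    apply Finset.sum_le_sum
    intro ℓ _
    exact div_le_div_of_nonneg_right (val_le_one _) (by positivity) |>.trans_eq rfl
  have h2 : ∑ ℓ : Fin m, (1:ℝ)/2^(ℓ.1+1) = 1 - (1/2)^m := by
    rw [Fin.sum_univ_eq_sum_range (fun ℓ => (1:ℝ)/2^(ℓ+1))]
    exact sum_inv_pow m
  have : (0:ℝ) < (1/2)^m := by positivity
  linarith

lemma floor_pt' {m : ℕ} (v : Fin m → ZMod 2) : ⌊pt' v⌋ = 0 := by
  rw [Int.floor_eq_zero_iff]
  exact ⟨pt'_nonneg v, pt'_lt_one v⟩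

lemma floor_two_pt' {m : ℕ} (hm : 1 ≤ m) (v : Fin m → ZMod 2) :
    ⌊2 * pt' v⌋ = ((v ⟨0, hm⟩).val : ℤ) := by
  set e0 : Fin m := ⟨0, hm⟩ with he0
  have h2pt : 2 * pt' v = ∑ ℓ : Fin m, ((v ℓ).val : ℝ) / 2 ^ ℓ.1 := by
    rw [pt', Finset.mul_sum]
    apply Finset.sum_congr rfl
    intro ℓ _
    rw [pow_succ]
    field_simp
  have hsplit : 2 * pt' v
      = ((v e0).val : ℝ) + ∑ ℓ ∈ Finset.univ.erase e0, ((v ℓ).val : ℝ) / 2 ^ ℓ.1 := by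
    rw [h2pt, ← Finset.add_sum_erase _ _ (Finset.mem_univ e0)]
    norm_num
  set T := ∑ ℓ ∈ Finset.univ.erase e0, ((v ℓ).val : ℝ) / 2 ^ ℓ.1 with hT
  have hT0 : 0 ≤ T := by
    apply Finset.sum_nonneg; intro ℓ _; positivity
  have hT1 : T < 1 := by
    have hb : T ≤ ∑ ℓ ∈ Finset.univ.erase e0, (1:ℝ)/2^ℓ.1 := by
      apply Finset.sum_le_sum
      intro ℓ _
      exact div_le_div_of_nonneg_right (val_le_one _) (by positivity)
    have he : ∑ ℓ ∈ Finset.univ.erase e0, (1:ℝ)/2^ℓ.1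
        = (∑ ℓ : Fin m, (1:ℝ)/2^ℓ.1) - 1/2^e0.1 := by
      rw [Finset.sum_erase_eq_sub (Finset.mem_univ e0)]
    have hu : ∑ ℓ : Fin m, (1:ℝ)/2^ℓ.1 = 2 - 2*(1/2)^m := by
      rw [Fin.sum_univ_eq_sum_range (fun ℓ => (1:ℝ)/2^ℓ)]
      exact sum_inv_pow' m
    have hp : (0:ℝ) < (1/2)^m := by positivity
    have h1 : 1/2^e0.1 = (1:ℝ) := by rw [he0]; norm_num
    rw [he, hu, h1] at hb
    linarith
  rw [hsplit]
  rw [Int.floor_eq_iff]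
  constructor
  · push_cast; linarith
  · push_cast; linarith

lemma Nf_zero {m s : ℕ} (hm : 1 ≤ m) (C : Fin s → Matrix (Fin m) (Fin m) (ZMod 2))
    (i i' : ℕ) (j : Fin s) :
    (Nf (pt C i j) (pt C i' j) 0 : ℚ) =
      (-1)^(((C j).mulVec (bvec m i) ⟨0,hm⟩ + (C j).mulVec (bvec m i') ⟨0,hm⟩).val) := by
  have hpt : pt C i j = pt' ((C j).mulVec (bvec m i)) := rfl
  have hpt' : pt C i' j = pt' ((C j).mulVec (bvec m i')) := rfl
  have e1 : (2:ℝ)^(0+1) = 2 := by norm_num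
  have e0 : (2:ℝ)^(0:ℕ) = 1 := by norm_num
  unfold Nf
  rw [hpt, hpt', e1, e0, one_mul, one_mul, floor_two_pt' hm, floor_two_pt' hm,
    floor_pt', floor_pt', if_pos rfl]
  set d := (C j).mulVec (bvec m i) ⟨0,hm⟩
  set d' := (C j).mulVec (bvec m i') ⟨0,hm⟩
  by_cases h : d = d'
  · rw [if_pos (by exact_mod_cast (val_iff d d').mpr h), h, self_add]
    norm_num
  · rw [if_neg (by
      intro hc
      exact h ((val_iff d d').mp (by exact_mod_cast hc))), add_val d d' h]
    norm_num

lemma prod_Nf_one {m s : ℕ} (hm : 1 ≤ m) (C : Fin s → Matrix (Fin m) (Fin m) (ZMod 2))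
    (u'' : Finset (Fin s))
    (hrow : ∀ ℓ : Fin m, ∑ j ∈ u'', C j ⟨0, hm⟩ ℓ = 0) (i i' : ℕ) :
    ∏ j ∈ u'', (Nf (pt C i j) (pt C i' j) 0 : ℚ) = 1 := by
  have hmv : ∀ (b : Fin m → ZMod 2), ∑ j ∈ u'', (C j).mulVec b ⟨0,hm⟩ = 0 := by
    intro b
    simp only [Matrix.mulVec, dotProduct]
    rw [Finset.sum_comm]
    apply Finset.sum_eq_zero
    intro ℓ _
    rw [← Finset.sum_mul, hrow ℓ, zero_mul]
  have hprod : ∏ j ∈ u'', (Nf (pt C i j) (pt C i' j) 0 : ℚ)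
      = (-1 : ℚ)^(∑ j ∈ u'', ((C j).mulVec (bvec m i) ⟨0,hm⟩
          + (C j).mulVec (bvec m i') ⟨0,hm⟩).val) := by
    rw [← Finset.prod_pow_eq_pow_sum]
    exact Finset.prod_congr rfl (fun j _ => Nf_zero hm C i i' j)
  rw [hprod]
  apply Even.neg_one_pow
  rw [even_iff_two_dvd, ← ZMod.natCast_eq_zero_iff]
  push_cast
  simp only [ZMod.natCast_val, ZMod.cast_id]
  rw [Finset.sum_add_distrib, hmv, hmv, add_zero]

lemma exists_row_sum_zero {m s : ℕ} (hm : 1 ≤ m)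
    (C : Fin s → Matrix (Fin m) (Fin m) (ZMod 2))
    (h : ∃ u : Finset (Fin s), u.Nonempty ∧ (stack C u (fun _ => 1)).rank < u.card) :
    ∃ u'' : Finset (Fin s), u''.Nonempty ∧
      ∀ ℓ : Fin m, ∑ j ∈ u'', C j ⟨0, hm⟩ ℓ = 0 := by
  obtain ⟨u, hu, hrank⟩ := h
  have hnli : ¬ LinearIndependent (ZMod 2) (stack C u (fun _ => 1)) := by
    intro hli
    have hc : (stack C u (fun _ => 1)).rank = _ := hli.rank_matrix
    rw [hc] at hrank
    simp [Fintype.card_sigma] at hrank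
  obtain ⟨g, hg0, p, hp⟩ := Fintype.not_linearIndependent_iff.mp hnli
  set f : Fin s → (Fin m → ZMod 2) := fun j => rowAt m (C j) 0 with hf
  have hg0' : ∑ j : {x // x ∈ u}, g ⟨j, 0⟩ • f j.1 = 0 := by
    rw [← Finset.univ_sigma_univ, Finset.sum_sigma] at hg0
    convert hg0 using 2 with j
    rw [Fin.sum_univ_one]
    rfl
  classical
  set u'' : Finset (Fin s) :=
    Finset.image Subtype.val (Finset.univ.filter (fun j : {x // x ∈ u} => g ⟨j, 0⟩ ≠ 0))
    with hu''
  have hp0 : p = ⟨p.1, 0⟩ := by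
    obtain ⟨p1, p2⟩ := p
    simp [Subsingleton.elim p2 0]
  have hne : u''.Nonempty := by
    refine ⟨p.1.1, Finset.mem_image.mpr ⟨p.1, Finset.mem_filter.mpr ⟨Finset.mem_univ _, ?_⟩, rfl⟩⟩
    rw [hp0] at hp; exact hp
  have hsum0 : ∑ j ∈ u'', f j = 0 := by
    rw [hu'', Finset.sum_image (by intro a _ b _ hab; exact Subtype.ext hab)]
    calc ∑ j ∈ Finset.univ.filter (fun j : {x // x ∈ u} => g ⟨j, 0⟩ ≠ 0), f j.1
        = ∑ j ∈ Finset.univ.filter (fun j : {x // x ∈ u} => g ⟨j, 0⟩ ≠ 0), g ⟨j, 0⟩ • f j.1 :=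
          Finset.sum_congr rfl (fun j hj => by
            rw [zmod2_ne _ (Finset.mem_filter.mp hj).2, one_smul])
      _ = ∑ j : {x // x ∈ u}, g ⟨j, 0⟩ • f j.1 :=
          Finset.sum_filter_of_ne (fun x _ hx => by
            intro h0; apply hx; rw [h0, zero_smul])
      _ = 0 := hg0'
  refine ⟨u'', hne, fun ℓ => ?_⟩
  have hfl := congrFun hsum0 ℓ
  rw [Finset.sum_apply, Pi.zero_apply] at hfl
  convert hfl using 2 with j hj
  rw [hf]; simp only [rowAt]; rw [dif_pos (show 0 < m from hm)]

theorem statement (m s : ℕ) (hm : 1 ≤ m) (hs : 1 ≤ s)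
    (C : Fin s → Matrix (Fin m) (Fin m) (ZMod 2))
    (h : ∃ u : Finset (Fin s), u.Nonempty ∧ (stack C u (fun _ => 1)).rank < u.card) :
    IsGreatest {x : ℚ | ∃ u' : Finset (Fin s), ∃ k : Fin s → ℕ,
        u'.Nonempty ∧ (∀ j ∈ u', k j ≤ m - 1) ∧ x = Gam C u' k}
      ((2 : ℚ) ^ m) := by
  constructor
  · -- membership
    obtain ⟨u'', hne, hrow⟩ := exists_row_sum_zero hm C h
    refine ⟨u'', fun _ => 0, hne, fun j _ => Nat.zero_le _, ?_⟩
    have hS : ∑ i ∈ Finset.range (2 ^ m), ∑ i' ∈ Finset.range (2 ^ m),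
        ∏ j ∈ u'', (Nf (pt C i j) (pt C i' j) ((fun _ => 0) j) : ℚ) = (2^m : ℚ) * 2^m := by
      calc ∑ i ∈ Finset.range (2 ^ m), ∑ i' ∈ Finset.range (2 ^ m),
            ∏ j ∈ u'', (Nf (pt C i j) (pt C i' j) ((fun _ => 0) j) : ℚ)
          = ∑ _i ∈ Finset.range (2 ^ m), ∑ _i' ∈ Finset.range (2 ^ m), (1:ℚ) :=
            Finset.sum_congr rfl (fun i _ => Finset.sum_congr rfl
              (fun i' _ => prod_Nf_one hm C u'' hrow i i'))
        _ = (2^m : ℚ) * 2^m := by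
            simp [Finset.sum_const, Finset.card_range]
    rw [Gam, hS, ← mul_assoc, inv_mul_cancel₀ (by positivity), one_mul]
  · -- upper bound
    rintro x ⟨u', k, hne, hk, rfl⟩
    have habs : ∀ (y y' : ℝ) (c : ℕ), |(Nf y y' c : ℚ)| ≤ 1 := by
      intro y y' c
      unfold Nf
      split_ifs <;> norm_num
    have hb : ∀ i i' : ℕ, ∏ j ∈ u', (Nf (pt C i j) (pt C i' j) (k j) : ℚ) ≤ 1 := by
      intro i i'
      calc ∏ j ∈ u', (Nf (pt C i j) (pt C i' j) (k j) : ℚ)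
          ≤ |∏ j ∈ u', (Nf (pt C i j) (pt C i' j) (k j) : ℚ)| := le_abs_self _
        _ = ∏ j ∈ u', |(Nf (pt C i j) (pt C i' j) (k j) : ℚ)| := Finset.abs_prod _ _
        _ ≤ 1 := Finset.prod_le_one (fun j _ => abs_nonneg _) (fun j _ => habs _ _ _)
    have hS : ∑ i ∈ Finset.range (2 ^ m), ∑ i' ∈ Finset.range (2 ^ m),
        ∏ j ∈ u', (Nf (pt C i j) (pt C i' j) (k j) : ℚ) ≤ (2^m : ℚ) * 2^m := by
      calc ∑ i ∈ Finset.range (2 ^ m), ∑ i' ∈ Finset.range (2 ^ m),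
            ∏ j ∈ u', (Nf (pt C i j) (pt C i' j) (k j) : ℚ)
          ≤ ∑ _i ∈ Finset.range (2 ^ m), ∑ _i' ∈ Finset.range (2 ^ m), (1:ℚ) :=
            Finset.sum_le_sum (fun i _ => Finset.sum_le_sum (fun i' _ => hb i i'))
        _ = (2^m : ℚ) * 2^m := by
            simp [Finset.sum_const, Finset.card_range]
    calc Gam C u' k
        ≤ (2 ^ m : ℚ)⁻¹ * ((2^m : ℚ) * 2^m) := by
          rw [Gam]
          exact mul_le_mul_of_nonneg_left hS (by positivity)
      _ = (2 : ℚ) ^ m := by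
          rw [← mul_assoc, inv_mul_cancel₀ (by positivity), one_mul]

end
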